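/- arXiv:2405.04335 — 2 statements merged into one kernel-verified Lean document; each statement's English description precedes it below -/
import Mathlib

section
/- Let (Y_i)_{i≥1} be i.i.d. nonnegative random variables with E[Y_1]=1 and finite moments of all orders. Then for every q ≥ 1 there is a constant C_q (depending only on q and the law of Y_1) such that for every sequence (α_i)_{i≥1} of nonnegative reals with Σ_i α_i ≤ 1, one has P(Σ_i α_i Y_i ≥ 2) ≤ C_q · (max_i α_i)^q. -/
open MeasureTheory ProbabilityTheory

lemma exp_le_quad {x : ℝ} (h0 : 0 ≤ x) (h1 : x ≤ 1) : Real.exp x ≤ 1 + x + x ^ 2 := by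
  have hb := Real.exp_bound (n := 2) (by rw [abs_of_nonneg h0]; exact h1) (by norm_num)
  have h2 : Real.exp x - (1 + x) ≤ |x| ^ 2 * (3 / (2 * 2)) := by
    have := abs_le.mp hb
    simp [Finset.sum_range_succ] at this ⊢
    nlinarith [this.2]
  rw [abs_of_nonneg h0] at h2
  nlinarith [sq_nonneg x]

lemma neg_log_le {a : ℝ} (ha : 0 < a) : -Real.log a ≤ 4 * a ^ (-(1/4) : ℝ) := by
  have ht : (0:ℝ) < a ^ (-(1/4) : ℝ) := Real.rpow_pos_of_pos ha _
  have hlog : Real.log (a ^ (-(1/4) : ℝ)) = -(1/4) * Real.log a := Real.log_rpow ha _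
  have h := Real.log_le_sub_one_of_pos ht
  rw [hlog] at h
  linarith [ht]

/-- mgf bound for a bounded nonnegative variable. -/
lemma mgf_trunc_bound {Ω : Type*} [MeasurableSpace Ω] (μ : Measure Ω) [IsProbabilityMeasure μ]
    {Z : Ω → ℝ} (hZm : Measurable Z) {ε L c m2 : ℝ} (hL : 0 ≤ L)
    (hZ0 : ∀ ω, 0 ≤ Z ω) (hZε : ∀ ω, Z ω ≤ ε) (hLε : L * ε ≤ 1)
    (hZint : Integrable Z μ) (hZ2int : Integrable (fun ω => Z ω ^ 2) μ)
    (hEZ : ∫ ω, Z ω ∂μ ≤ c) (hEZ2 : ∫ ω, Z ω ^ 2 ∂μ ≤ m2) :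
    mgf Z μ L ≤ Real.exp (L * c + L ^ 2 * m2) := by
  have hLZ : ∀ ω, 0 ≤ L * Z ω ∧ L * Z ω ≤ 1 := by
    intro ω
    refine ⟨mul_nonneg hL (hZ0 ω), ?_⟩
    calc L * Z ω ≤ L * ε := mul_le_mul_of_nonneg_left (hZε ω) hL
      _ ≤ 1 := hLε
  have hexpint : Integrable (fun ω => Real.exp (L * Z ω)) μ := by
    refine (integrable_const (Real.exp 1)).mono'
      ((hZm.const_mul L).exp.aestronglyMeasurable) ?_
    exact Filter.Eventually.of_forall fun ω => by
      rw [Real.norm_eq_abs, abs_of_nonneg (Real.exp_pos _).le]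
      exact Real.exp_le_exp.mpr (hLZ ω).2
  have hsq : (fun ω => (L * Z ω) ^ 2) = fun ω => L ^ 2 * Z ω ^ 2 := by
    funext ω; ring
  calc mgf Z μ L = ∫ ω, Real.exp (L * Z ω) ∂μ := rfl
    _ ≤ ∫ ω, (1 + L * Z ω + (L * Z ω) ^ 2) ∂μ := by
        apply integral_mono hexpint
        · refine ((integrable_const 1).add (hZint.const_mul L)).add ?_
          rw [hsq]; exact hZ2int.const_mul _
        · intro ω
          exact exp_le_quad (hLZ ω).1 (hLZ ω).2
    _ = 1 + L * ∫ ω, Z ω ∂μ + L ^ 2 * ∫ ω, Z ω ^ 2 ∂μ := by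
        have hint1 : Integrable (fun ω => 1 + L * Z ω) μ :=
          (integrable_const 1).add (hZint.const_mul L)
        have hint2 : Integrable (fun ω => (L * Z ω) ^ 2) μ := by
          rw [hsq]; exact hZ2int.const_mul _
        rw [integral_add hint1 hint2, integral_add (integrable_const 1) (hZint.const_mul L),
          integral_const, hsq, integral_const_mul, integral_const_mul]
        simp
    _ ≤ 1 + (L * c + L ^ 2 * m2) := by nlinarith [sq_nonneg L]
    _ ≤ Real.exp (L * c + L ^ 2 * m2) := by
        rw [add_comm]; exact Real.add_one_le_exp _

/-- Chernoff bound for a finite sum of independent bounded variables. -/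
lemma chernoff_trunc {Ω : Type*} [MeasurableSpace Ω] (μ : Measure Ω) [IsProbabilityMeasure μ]
    (Z : ℕ → Ω → ℝ) (hZmeas : ∀ i, Measurable (Z i))
    (hZindep : iIndepFun Z μ)
    {ε L : ℝ} (hL : 0 ≤ L) (hε : 0 ≤ ε)
    (hZ0 : ∀ i ω, 0 ≤ Z i ω) (hZε : ∀ i ω, Z i ω ≤ ε)
    (n : ℕ) (s : ℝ) :
    (μ {ω | s ≤ ∑ i ∈ Finset.range n, Z i ω}).toReal ≤
      Real.exp (-L * s) * ∏ i ∈ Finset.range n, mgf (Z i) μ L := by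
  have hSeq : (∑ i ∈ Finset.range n, Z i) = fun ω => ∑ i ∈ Finset.range n, Z i ω := by
    funext ω; simp [Finset.sum_apply]
  have hmeasS : Measurable (∑ i ∈ Finset.range n, Z i) := by
    rw [hSeq]
    exact Finset.measurable_sum _ fun i _ => hZmeas i
  have hbound : ∀ ω, (∑ i ∈ Finset.range n, Z i) ω ≤ n * ε := by
    intro ω
    rw [hSeq]
    calc ∑ i ∈ Finset.range n, Z i ω ≤ ∑ _i ∈ Finset.range n, ε :=
        Finset.sum_le_sum fun i _ => hZε i ω
      _ = n * ε := by simp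
  have hint : Integrable (fun ω => Real.exp (L * (∑ i ∈ Finset.range n, Z i) ω)) μ := by
    refine (integrable_const (Real.exp (L * (n * ε)))).mono'
      ((hmeasS.const_mul L).exp.aestronglyMeasurable) ?_
    refine Filter.Eventually.of_forall fun ω => ?_
    rw [Real.norm_eq_abs, abs_of_nonneg (Real.exp_pos _).le]
    exact Real.exp_le_exp.mpr (mul_le_mul_of_nonneg_left (hbound ω) hL)
  have h := measure_ge_le_exp_mul_mgf (μ := μ) (X := ∑ i ∈ Finset.range n, Z i) s hL hint
  rw [hZindep.mgf_sum hZmeas, measureReal_def] at h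
  convert h using 3
  rw [hSeq]

/-- Passing from finite partial sums to the tsum event. -/
lemma measure_tsum_ge_le {Ω : Type*} [MeasurableSpace Ω] (μ : Measure Ω)
    {f : ℕ → Ω → ℝ} (h0 : ∀ i ω, 0 ≤ f i ω) {B : ENNReal}
    (h : ∀ n, μ {ω | 3/2 ≤ ∑ i ∈ Finset.range n, f i ω} ≤ B) :
    μ {ω | 2 ≤ ∑' i, f i ω} ≤ B := by
  have hsub : {ω | 2 ≤ ∑' i, f i ω} ⊆ ⋃ n, {ω | 3/2 ≤ ∑ i ∈ Finset.range n, f i ω} := by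
    intro ω hω
    simp only [Set.mem_setOf_eq] at hω
    by_cases hsumm : Summable fun i => f i ω
    · have htend := hsumm.hasSum.tendsto_sum_nat
      have : ∀ᶠ n in Filter.atTop, 3/2 ≤ ∑ i ∈ Finset.range n, f i ω := by
        apply htend.eventually_const_le
        linarith
      obtain ⟨n, hn⟩ := this.exists
      exact Set.mem_iUnion.mpr ⟨n, hn⟩
    · rw [tsum_eq_zero_of_not_summable hsumm] at hω
      linarith
  have hmono : Monotone fun n => {ω | 3/2 ≤ ∑ i ∈ Finset.range n, f i ω} := by
    intro m n hmn ω hω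
    simp only [Set.mem_setOf_eq] at hω ⊢
    calc (3:ℝ)/2 ≤ ∑ i ∈ Finset.range m, f i ω := hω
      _ ≤ ∑ i ∈ Finset.range n, f i ω :=
        Finset.sum_le_sum_of_subset_of_nonneg (Finset.range_subset_range.mpr hmn)
          (fun i _ _ => h0 i ω)
  calc μ {ω | 2 ≤ ∑' i, f i ω} ≤ μ (⋃ n, {ω | 3/2 ≤ ∑ i ∈ Finset.range n, f i ω}) :=
      measure_mono hsub
    _ = ⨆ n, μ {ω | 3/2 ≤ ∑ i ∈ Finset.range n, f i ω} :=
      (hmono.directed_le).measure_iUnion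
    _ ≤ B := iSup_le h

/-- Markov inequality in ofReal form. -/
lemma markov_rpow {Ω : Type*} [MeasurableSpace Ω] (μ : Measure Ω) [IsProbabilityMeasure μ]
    {X : Ω → ℝ} (hX0 : ∀ ω, 0 ≤ X ω) {p c : ℝ} (hp : 0 ≤ p) (hc : 0 < c)
    (hint : Integrable (fun ω => X ω ^ p) μ) :
    μ {ω | c ≤ X ω} ≤ ENNReal.ofReal ((∫ ω, X ω ^ p ∂μ) / c ^ p) := by
  have hcp : 0 < c ^ p := Real.rpow_pos_of_pos hc p
  have hsub : {ω | c ≤ X ω} ⊆ {ω | c ^ p ≤ X ω ^ p} := by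
    intro ω hω
    exact Real.rpow_le_rpow hc.le hω hp
  have hm := mul_meas_ge_le_integral_of_nonneg
    (Filter.Eventually.of_forall fun ω => Real.rpow_nonneg (hX0 ω) p) hint (c ^ p)
  calc μ {ω | c ≤ X ω} ≤ μ {ω | c ^ p ≤ X ω ^ p} := measure_mono hsub
    _ ≤ ENNReal.ofReal ((∫ ω, X ω ^ p ∂μ) / c ^ p) := by
        rw [ENNReal.le_ofReal_iff_toReal_le (measure_ne_top _ _)
          (div_nonneg (integral_nonneg fun ω => Real.rpow_nonneg (hX0 ω) p) hcp.le)]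
        rw [le_div_iff₀ hcp, mul_comm]
        exact hm

set_option maxHeartbeats 1000000 in
/-- For i.i.d. nonnegative random variables `Y` with mean one and
finite moments of all orders, for every `q ≥ 1` there is a constant `C` such that
for all nonnegative weights `α` with `∑ α i ≤ 1`,
`P(∑ α i * Y i ≥ 2) ≤ C * (sup α)^q`. -/
theorem statement0
    {Ω : Type*} [MeasurableSpace Ω] (μ : Measure Ω) [IsProbabilityMeasure μ]
    (Y : ℕ → Ω → ℝ)
    (hmeas : ∀ i, Measurable (Y i))
    (hindep : iIndepFun Y μ)
    (hident : ∀ i, IdentDistrib (Y i) (Y 0) μ μ)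
    (hnonneg : ∀ i ω, 0 ≤ Y i ω)
    (hmean : ∫ ω, Y 0 ω ∂μ = 1)
    (hmom : ∀ p : ℝ, 1 ≤ p → Integrable (fun ω => Y 0 ω ^ p) μ) :
    ∀ q : ℝ, 1 ≤ q → ∃ C : ℝ, 0 < C ∧
      ∀ α : ℕ → ℝ, (∀ i, 0 ≤ α i) → (∑' i, α i) ≤ 1 → Summable α →
        μ {ω | 2 ≤ ∑' i, α i * Y i ω} ≤ ENNReal.ofReal (C * (⨆ i, α i) ^ q) := by
  intro q hq
  have hq0 : (0:ℝ) < q := lt_of_lt_of_le one_pos hq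
  -- basic integrability facts
  have hY0int : Integrable (Y 0) μ := by
    have := hmom 1 le_rfl
    simpa [Real.rpow_one] using this
  have hYint : ∀ i, Integrable (Y i) μ := fun i => ((hident i).integrable_iff).mpr hY0int
  have hEYi : ∀ i, ∫ ω, Y i ω ∂μ = 1 := fun i => ((hident i).integral_eq).trans hmean
  set M2 := ∫ ω, (Y 0 ω) ^ 2 ∂μ with hM2def
  have hY0sqint : Integrable (fun ω => (Y 0 ω) ^ 2) μ := by
    have h := hmom 2 one_le_two
    refine h.congr (Filter.Eventually.of_forall fun ω => ?_)
    simp only [Real.rpow_two]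
  have hident2 : ∀ i, IdentDistrib (fun ω => (Y i ω) ^ 2) (fun ω => (Y 0 ω) ^ 2) μ μ :=
    fun i => (hident i).comp (measurable_id.pow_const 2)
  have hYisqint : ∀ i, Integrable (fun ω => (Y i ω) ^ 2) μ :=
    fun i => ((hident2 i).integrable_iff).mpr hY0sqint
  have hEYisq : ∀ i, ∫ ω, (Y i ω) ^ 2 ∂μ = M2 := fun i => (hident2 i).integral_eq
  have hM2 : 0 ≤ M2 := integral_nonneg fun ω => sq_nonneg _
  set p := 2 * q + 2 with hpdef
  have hp1 : (1:ℝ) ≤ p := by simp only [hpdef]; linarith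
  have hp0 : (0:ℝ) ≤ p := by linarith
  have hmp : Measurable fun x : ℝ => x ^ p := (Real.continuous_rpow_const hp0).measurable
  set Mp := ∫ ω, Y 0 ω ^ p ∂μ with hMpdef
  have hY0pint : Integrable (fun ω => Y 0 ω ^ p) μ := hmom p hp1
  have hidentp : ∀ i, IdentDistrib (fun ω => Y i ω ^ p) (fun ω => Y 0 ω ^ p) μ μ :=
    fun i => (hident i).comp hmp
  have hYipint : ∀ i, Integrable (fun ω => Y i ω ^ p) μ :=
    fun i => ((hidentp i).integrable_iff).mpr hY0pint
  have hEYip : ∀ i, ∫ ω, Y i ω ^ p ∂μ = Mp := fun i => (hidentp i).integral_eq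
  have hMp : 0 ≤ Mp := integral_nonneg fun ω => Real.rpow_nonneg (hnonneg 0 ω) p
  set K := Real.exp (64 * q ^ 2 * M2) with hKdef
  have hK : 0 < K := Real.exp_pos _
  refine ⟨(8 * q) ^ (4 * q) + Mp + K, ?_, ?_⟩
  · have h8q : (0:ℝ) ≤ (8 * q) ^ (4 * q) := Real.rpow_nonneg (by linarith) _
    linarith
  intro α hα hsum hαsummable
  set a := ⨆ i, α i with hadef
  have hαle : ∀ i, α i ≤ 1 := fun i =>
    (hαsummable.le_tsum i fun j _ => hα j).trans hsum
  have hbdd : BddAbove (Set.range α) := ⟨1, by rintro _ ⟨i, rfl⟩; exact hαle i⟩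
  have hai : ∀ i, α i ≤ a := fun i => le_ciSup hbdd i
  have ha0 : 0 ≤ a := le_trans (hα 0) (hai 0)
  have ha1 : a ≤ 1 := ciSup_le hαle
  have haq0 : 0 ≤ a ^ q := Real.rpow_nonneg ha0 _
  rcases eq_or_lt_of_le ha0 with hzero | hapos
  · -- all weights are zero
    have hall : ∀ i, α i = 0 := fun i => le_antisymm (hzero ▸ hai i) (hα i)
    have hempty : {ω | 2 ≤ ∑' i, α i * Y i ω} = ∅ := by
      ext ω
      simp [hall, tsum_zero]
    rw [hempty, measure_empty]
    exact zero_le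
  -- main case: 0 < a
  by_cases hsmall : 8 * q * a ^ ((1:ℝ)/4) ≤ 1
  swap
  · -- large a: trivial bound
    push_neg at hsmall
    have h1 : (1:ℝ) ≤ (8 * q) ^ (4 * q) * a ^ q := by
      have h8a : (1:ℝ) ≤ (8 * q) ^ (4:ℝ) * a := by
        have hpow : (1:ℝ) ≤ (8 * q * a ^ ((1:ℝ)/4)) ^ (4:ℕ) := one_le_pow₀ hsmall.le
        calc (1:ℝ) ≤ (8 * q * a ^ ((1:ℝ)/4)) ^ (4:ℕ) := hpow
          _ = (8 * q) ^ (4:ℕ) * (a ^ ((1:ℝ)/4)) ^ (4:ℕ) := by ring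
          _ = (8 * q) ^ (4:ℝ) * a := by
              rw [← Real.rpow_natCast (8 * q) 4, ← Real.rpow_natCast (a ^ ((1:ℝ)/4)) 4,
                ← Real.rpow_mul ha0]
              norm_num
      calc (1:ℝ) = 1 ^ q := (Real.one_rpow q).symm
        _ ≤ ((8 * q) ^ (4:ℝ) * a) ^ q := Real.rpow_le_rpow zero_le_one h8a hq0.le
        _ = ((8 * q) ^ (4:ℝ)) ^ q * a ^ q :=
            Real.mul_rpow (Real.rpow_nonneg (by linarith) _) ha0
        _ = (8 * q) ^ (4 * q) * a ^ q := by rw [← Real.rpow_mul (by linarith : (0:ℝ) ≤ 8 * q)]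
    calc μ {ω | 2 ≤ ∑' i, α i * Y i ω} ≤ 1 := prob_le_one
      _ = ENNReal.ofReal 1 := by simp
      _ ≤ ENNReal.ofReal (((8 * q) ^ (4 * q) + Mp + K) * a ^ q) := by
          apply ENNReal.ofReal_le_ofReal
          nlinarith [mul_nonneg hMp haq0, mul_nonneg hK.le haq0]
  -- small a
  have ha1' : a < 1 := by
    by_contra hcon
    push_neg at hcon
    have : (1:ℝ) ≤ a ^ ((1:ℝ)/4) := Real.one_le_rpow hcon (by norm_num)
    nlinarith
  set ε := a ^ ((1:ℝ)/2) with hεdef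
  have hε : 0 < ε := Real.rpow_pos_of_pos hapos _
  set L := 2 * q * (-Real.log a) with hLdef
  have hloga : Real.log a < 0 := Real.log_neg hapos ha1'
  have hL : 0 < L := mul_pos (by linarith) (by linarith)
  have hlogbound : -Real.log a ≤ 4 * a ^ (-(1/4) : ℝ) := neg_log_le hapos
  have hLε : L * ε ≤ 1 := by
    have h1 : L * ε ≤ 2 * q * (4 * a ^ (-(1/4) : ℝ)) * a ^ ((1:ℝ)/2) := by
      apply mul_le_mul_of_nonneg_right _ hε.le
      exact mul_le_mul_of_nonneg_left hlogbound (by linarith)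
    have h2 : a ^ (-(1/4) : ℝ) * a ^ ((1:ℝ)/2) = a ^ ((1:ℝ)/4) := by
      rw [← Real.rpow_add hapos]; norm_num
    calc L * ε ≤ 2 * q * (4 * a ^ (-(1/4) : ℝ)) * a ^ ((1:ℝ)/2) := h1
      _ = 8 * q * (a ^ (-(1/4) : ℝ) * a ^ ((1:ℝ)/2)) := by ring
      _ = 8 * q * a ^ ((1:ℝ)/4) := by rw [h2]
      _ ≤ 1 := hsmall
  have hL2a : L ^ 2 * a ≤ 64 * q ^ 2 := by
    have hsq : (-Real.log a) ^ 2 ≤ 16 * a ^ (-(1/2) : ℝ) := by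
      have h2 : (4 * a ^ (-(1/4) : ℝ)) ^ 2 = 16 * a ^ (-(1/2) : ℝ) := by
        rw [mul_pow, ← Real.rpow_natCast (a ^ (-(1/4):ℝ)) 2, ← Real.rpow_mul ha0]
        norm_num
      nlinarith [neg_nonneg.mpr hloga.le]
    have haa : a ^ (-(1/2) : ℝ) * a = a ^ ((1:ℝ)/2) := by
      nth_rewrite 2 [← Real.rpow_one a]
      rw [← Real.rpow_add hapos]; norm_num
    have hle1 : a ^ ((1:ℝ)/2) ≤ 1 := Real.rpow_le_one ha0 ha1 (by norm_num)
    have hLa : L ^ 2 * a = 4 * q ^ 2 * ((-Real.log a) ^ 2 * a) := by rw [hLdef]; ring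
    rw [hLa]
    have h3 : (-Real.log a) ^ 2 * a ≤ 16 * a ^ (-(1/2) : ℝ) * a :=
      mul_le_mul_of_nonneg_right hsq hapos.le
    have h4 : 16 * a ^ (-(1/2) : ℝ) * a = 16 * a ^ ((1:ℝ)/2) := by
      rw [mul_assoc, haa]
    nlinarith [sq_nonneg q]
  have hexp : Real.exp (-(L / 2)) = a ^ q := by
    rw [Real.rpow_def_of_pos hapos, hLdef]; ring_nf
  -- the truncated variables
  set Z : ℕ → Ω → ℝ := fun i ω => if α i * Y i ω ≤ ε then α i * Y i ω else 0 with hZdef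
  have hZnonneg : ∀ i ω, 0 ≤ Z i ω := by
    intro i ω; simp only [hZdef]
    split
    · exact mul_nonneg (hα i) (hnonneg i ω)
    · exact le_rfl
  have hZle : ∀ i ω, Z i ω ≤ ε := by
    intro i ω; simp only [hZdef]
    split
    · assumption
    · exact hε.le
  have hZleY : ∀ i ω, Z i ω ≤ α i * Y i ω := by
    intro i ω; simp only [hZdef]
    split
    · exact le_rfl
    · exact mul_nonneg (hα i) (hnonneg i ω)
  have hZmeas : ∀ i, Measurable (Z i) := by
    intro i
    apply Measurable.ite
    · exact measurableSet_le ((hmeas i).const_mul _) measurable_const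
    · exact (hmeas i).const_mul _
    · exact measurable_const
  have hZindep : iIndepFun Z μ := by
    have hgmeas : ∀ i, Measurable (fun x : ℝ => if α i * x ≤ ε then α i * x else 0) := by
      intro i
      apply Measurable.ite
      · exact measurableSet_le (measurable_id.const_mul _) measurable_const
      · exact measurable_id.const_mul _
      · exact measurable_const
    exact hindep.comp _ hgmeas
  have hZint : ∀ i, Integrable (Z i) μ := by
    intro i
    refine (integrable_const ε).mono' (hZmeas i).aestronglyMeasurable ?_
    exact Filter.Eventually.of_forall fun ω => by
      rw [Real.norm_eq_abs, abs_of_nonneg (hZnonneg i ω)]; exact hZle i ω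
  have hZsqint : ∀ i, Integrable (fun ω => (Z i ω) ^ 2) μ := by
    intro i
    refine (integrable_const (ε ^ 2)).mono' ((hZmeas i).pow_const 2).aestronglyMeasurable ?_
    exact Filter.Eventually.of_forall fun ω => by
      rw [Real.norm_eq_abs, abs_of_nonneg (sq_nonneg _)]
      exact pow_le_pow_left₀ (hZnonneg i ω) (hZle i ω) 2
  have hEZ : ∀ i, ∫ ω, Z i ω ∂μ ≤ α i := by
    intro i
    calc ∫ ω, Z i ω ∂μ ≤ ∫ ω, α i * Y i ω ∂μ :=
        integral_mono (hZint i) ((hYint i).const_mul _) (hZleY i)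
      _ = α i * ∫ ω, Y i ω ∂μ := integral_const_mul _ _
      _ = α i := by rw [hEYi i, mul_one]
  have hEZsq : ∀ i, ∫ ω, (Z i ω) ^ 2 ∂μ ≤ α i ^ 2 * M2 := by
    intro i
    have heq : (fun ω => (α i * Y i ω) ^ 2) = fun ω => α i ^ 2 * (Y i ω) ^ 2 := by
      funext ω; ring
    calc ∫ ω, (Z i ω) ^ 2 ∂μ ≤ ∫ ω, (α i * Y i ω) ^ 2 ∂μ := by
          apply integral_mono (hZsqint i)
          · rw [heq]; exact (hYisqint i).const_mul _
          · intro ω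
            exact pow_le_pow_left₀ (hZnonneg i ω) (hZleY i ω) 2
      _ = α i ^ 2 * M2 := by
          rw [heq, integral_const_mul, hEYisq i]
  -- mgf bound for each truncated variable
  have hmgf : ∀ i, mgf (Z i) μ L ≤ Real.exp (L * α i + L ^ 2 * (α i ^ 2 * M2)) :=
    fun i => mgf_trunc_bound μ (hZmeas i) hL.le (hZnonneg i) (hZle i) hLε
      (hZint i) (hZsqint i) (hEZ i) (hEZsq i)
  -- the chernoff part, for each n
  have hchern : ∀ n : ℕ,
      μ {ω | 3/2 ≤ ∑ i ∈ Finset.range n, Z i ω} ≤ ENNReal.ofReal (K * a ^ q) := by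
    intro n
    rw [ENNReal.le_ofReal_iff_toReal_le (measure_ne_top _ _)
      (mul_nonneg hK.le haq0)]
    have hsum1 : ∑ i ∈ Finset.range n, α i ≤ 1 :=
      (hαsummable.sum_le_tsum _ (fun i _ => hα i)).trans hsum
    have hsumsq : ∑ i ∈ Finset.range n, α i ^ 2 ≤ a := by
      calc ∑ i ∈ Finset.range n, α i ^ 2 ≤ ∑ i ∈ Finset.range n, a * α i := by
            apply Finset.sum_le_sum
            intro i _
            calc α i ^ 2 = α i * α i := sq (α i) ▸ rfl
              _ ≤ a * α i := mul_le_mul_of_nonneg_right (hai i) (hα i)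
        _ = a * ∑ i ∈ Finset.range n, α i := by rw [Finset.mul_sum]
        _ ≤ a * 1 := mul_le_mul_of_nonneg_left hsum1 hapos.le
        _ = a := mul_one a
    calc (μ {ω | 3/2 ≤ ∑ i ∈ Finset.range n, Z i ω}).toReal ≤
        Real.exp (-L * (3/2)) * ∏ i ∈ Finset.range n, mgf (Z i) μ L :=
          chernoff_trunc μ Z hZmeas hZindep hL.le hε.le hZnonneg hZle n (3/2)
      _ ≤ Real.exp (-L * (3/2)) *
          ∏ i ∈ Finset.range n, Real.exp (L * α i + L ^ 2 * (α i ^ 2 * M2)) := by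
          apply mul_le_mul_of_nonneg_left _ (Real.exp_pos _).le
          apply Finset.prod_le_prod
          · exact fun i _ => mgf_nonneg
          · exact fun i _ => hmgf i
      _ = Real.exp (-L * (3/2) + ∑ i ∈ Finset.range n, (L * α i + L ^ 2 * (α i ^ 2 * M2))) := by
          rw [← Real.exp_sum, ← Real.exp_add]
      _ ≤ Real.exp (-L * (3/2) + (L * 1 + L ^ 2 * (a * M2))) := by
          apply Real.exp_le_exp.mpr
          apply add_le_add_right
          rw [Finset.sum_add_distrib, ← Finset.mul_sum]
          have e1 : ∑ i ∈ Finset.range n, L ^ 2 * (α i ^ 2 * M2)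
              = L ^ 2 * ((∑ i ∈ Finset.range n, α i ^ 2) * M2) := by
            calc ∑ i ∈ Finset.range n, L ^ 2 * (α i ^ 2 * M2)
                = ∑ i ∈ Finset.range n, (L ^ 2 * M2) * α i ^ 2 := by
                  apply Finset.sum_congr rfl; intros; ring
              _ = (L ^ 2 * M2) * ∑ i ∈ Finset.range n, α i ^ 2 := by
                  rw [← Finset.mul_sum]
              _ = L ^ 2 * ((∑ i ∈ Finset.range n, α i ^ 2) * M2) := by ring
          rw [e1]
          apply add_le_add
          · exact mul_le_mul_of_nonneg_left hsum1 hL.le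
          · apply mul_le_mul_of_nonneg_left _ (sq_nonneg L)
            exact mul_le_mul_of_nonneg_right hsumsq hM2
      _ = Real.exp (-(L/2)) * Real.exp (L ^ 2 * (a * M2)) := by
          rw [← Real.exp_add]; ring_nf
      _ ≤ Real.exp (-(L/2)) * K := by
          apply mul_le_mul_of_nonneg_left _ (Real.exp_pos _).le
          rw [hKdef]
          apply Real.exp_le_exp.mpr
          calc L ^ 2 * (a * M2) = (L ^ 2 * a) * M2 := by ring
            _ ≤ (64 * q ^ 2) * M2 := mul_le_mul_of_nonneg_right hL2a hM2
            _ = 64 * q ^ 2 * M2 := by ring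
      _ = K * a ^ q := by rw [hexp, mul_comm]
  -- the tail part, for each n
  have htail : ∀ n : ℕ,
      μ (⋃ i ∈ Finset.range n, {ω | ε < α i * Y i ω}) ≤ ENNReal.ofReal (Mp * a ^ q) := by
    intro n
    have hterm : ∀ i, μ {ω | ε < α i * Y i ω} ≤ ENNReal.ofReal (Mp * α i ^ p / ε ^ p) := by
      intro i
      rcases eq_or_lt_of_le (hα i) with h0 | hpos
      · have hempty : {ω | ε < α i * Y i ω} = ∅ := by
          ext ω; simp [← h0, hε.le, not_lt.mpr hε.le]
        rw [hempty, measure_empty]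
        exact zero_le
      · have hc : 0 < ε / α i := div_pos hε hpos
        have hsub : {ω | ε < α i * Y i ω} ⊆ {ω | ε / α i ≤ Y i ω} := by
          intro ω hω
          simp only [Set.mem_setOf_eq] at hω ⊢
          rw [div_le_iff₀ hpos, mul_comm]
          exact hω.le
        calc μ {ω | ε < α i * Y i ω} ≤ μ {ω | ε / α i ≤ Y i ω} := measure_mono hsub
          _ ≤ ENNReal.ofReal ((∫ ω, Y i ω ^ p ∂μ) / (ε / α i) ^ p) :=
              markov_rpow μ (hnonneg i) hp0 hc (hYipint i)
          _ = ENNReal.ofReal (Mp * α i ^ p / ε ^ p) := by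
              rw [hEYip i, Real.div_rpow hε.le hpos.le, div_div_eq_mul_div]
    calc μ (⋃ i ∈ Finset.range n, {ω | ε < α i * Y i ω}) ≤
        ∑ i ∈ Finset.range n, μ {ω | ε < α i * Y i ω} := measure_biUnion_finset_le _ _
      _ ≤ ∑ i ∈ Finset.range n, ENNReal.ofReal (Mp * α i ^ p / ε ^ p) :=
          Finset.sum_le_sum fun i _ => hterm i
      _ = ENNReal.ofReal (∑ i ∈ Finset.range n, Mp * α i ^ p / ε ^ p) := by
          rw [ENNReal.ofReal_sum_of_nonneg]
          intro i _
          apply div_nonneg (mul_nonneg hMp (Real.rpow_nonneg (hα i) p))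
          exact (Real.rpow_nonneg hε.le p)
      _ ≤ ENNReal.ofReal (Mp * a ^ q) := by
          apply ENNReal.ofReal_le_ofReal
          have hαip : ∀ i, α i ^ p ≤ a ^ (p - 1) * α i := by
            intro i
            rcases eq_or_lt_of_le (hα i) with h0 | hpos
            · rw [← h0, Real.zero_rpow (by linarith : p ≠ 0), mul_zero]
            · have h1 : α i ^ p = α i ^ (p - 1) * α i := by
                have hre : α i ^ p = α i ^ (p - 1 + 1) := by norm_num
                rw [hre, Real.rpow_add hpos, Real.rpow_one]
              rw [h1]
              exact mul_le_mul_of_nonneg_right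
                (Real.rpow_le_rpow (hα i) (hai i) (by linarith)) (hα i)
          have hsump : ∑ i ∈ Finset.range n, α i ^ p ≤ a ^ (p - 1) := by
            calc ∑ i ∈ Finset.range n, α i ^ p ≤
                ∑ i ∈ Finset.range n, a ^ (p - 1) * α i :=
                  Finset.sum_le_sum fun i _ => hαip i
              _ = a ^ (p - 1) * ∑ i ∈ Finset.range n, α i := by rw [Finset.mul_sum]
              _ ≤ a ^ (p - 1) * 1 := by
                  apply mul_le_mul_of_nonneg_left _ (Real.rpow_nonneg ha0 _)
                  exact (hαsummable.sum_le_tsum _ (fun i _ => hα i)).trans hsum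
              _ = a ^ (p - 1) := mul_one _
          have hεp : ε ^ p = a ^ (p / 2) := by
            rw [hεdef, ← Real.rpow_mul ha0]
            congr 1
            ring
          have hfinal : a ^ (p - 1) / ε ^ p = a ^ q := by
            rw [hεp, ← Real.rpow_sub hapos]
            congr 1
            rw [hpdef]
            ring
          calc ∑ i ∈ Finset.range n, Mp * α i ^ p / ε ^ p
              = Mp * (∑ i ∈ Finset.range n, α i ^ p) / ε ^ p := by
                rw [Finset.mul_sum, Finset.sum_div]
            _ ≤ Mp * a ^ (p - 1) / ε ^ p := by
                have hd : (0:ℝ) < ε ^ p := Real.rpow_pos_of_pos hε p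
                gcongr
            _ = Mp * (a ^ (p - 1) / ε ^ p) := by ring
            _ = Mp * a ^ q := by rw [hfinal]
  -- combine, for each n
  have hcomb : ∀ n : ℕ,
      μ {ω | 3/2 ≤ ∑ i ∈ Finset.range n, α i * Y i ω} ≤
        ENNReal.ofReal (((8 * q) ^ (4 * q) + Mp + K) * a ^ q) := by
    intro n
    have hsub : {ω | 3/2 ≤ ∑ i ∈ Finset.range n, α i * Y i ω} ⊆
        (⋃ i ∈ Finset.range n, {ω | ε < α i * Y i ω}) ∪
        {ω | 3/2 ≤ ∑ i ∈ Finset.range n, Z i ω} := by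
      intro ω hω
      simp only [Set.mem_setOf_eq] at hω
      by_cases hU : ω ∈ ⋃ i ∈ Finset.range n, {ω | ε < α i * Y i ω}
      · exact Set.mem_union_left _ hU
      · right
        simp only [Set.mem_iUnion, Set.mem_setOf_eq, not_exists] at hU
        have heq : ∀ i ∈ Finset.range n, Z i ω = α i * Y i ω := by
          intro i hi
          have := hU i
          simp only [hZdef]
          rw [if_pos]
          push_neg at this
          exact this hi
        simp only [Set.mem_setOf_eq]
        rw [Finset.sum_congr rfl heq]
        exact hω
    calc μ {ω | 3/2 ≤ ∑ i ∈ Finset.range n, α i * Y i ω} ≤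
        μ ((⋃ i ∈ Finset.range n, {ω | ε < α i * Y i ω}) ∪
          {ω | 3/2 ≤ ∑ i ∈ Finset.range n, Z i ω}) := measure_mono hsub
      _ ≤ μ (⋃ i ∈ Finset.range n, {ω | ε < α i * Y i ω}) +
          μ {ω | 3/2 ≤ ∑ i ∈ Finset.range n, Z i ω} := measure_union_le _ _
      _ ≤ ENNReal.ofReal (Mp * a ^ q) + ENNReal.ofReal (K * a ^ q) :=
          add_le_add (htail n) (hchern n)
      _ = ENNReal.ofReal (Mp * a ^ q + K * a ^ q) :=
          (ENNReal.ofReal_add (mul_nonneg hMp haq0) (mul_nonneg hK.le haq0)).symm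
      _ ≤ ENNReal.ofReal (((8 * q) ^ (4 * q) + Mp + K) * a ^ q) := by
          apply ENNReal.ofReal_le_ofReal
          have h8q : (0:ℝ) ≤ (8 * q) ^ (4 * q) := Real.rpow_nonneg (by linarith) _
          nlinarith
  exact measure_tsum_ge_le μ (fun i ω => mul_nonneg (hα i) (hnonneg i ω)) hcomb
end

section
/- Let (W_n)_{n≥0} be a nonnegative adapted process with W_0 = 1, let A > 1, τ := inf{n ≥ 1 : W_n ≥ A}, and suppose there exists κ ∈ (0, 1/2] such that, for every n ≥ 1, almost surely on {τ ≥ n}, P(τ ∈ [n, n + Θ_n − 1] | F_{n-1}) ≥ κ^{Θ_n}, where Θ_n is an F_{n-1}-measurable positive-integer random variable. Then for any exponent q with 2^{q/2}κ = κ^{-1}: Σ_{n≥1} E[(2^{1−Θ_n})^{q/2} 1_{τ ≥ n}] ≤ 2^{q/2} P(τ < ∞). -/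
open MeasureTheory ProbabilityTheory

lemma geo_aux : ∀ t : ℕ, ∑ n ∈ Finset.Icc 1 t, ((2:ℝ)⁻¹)^(1+t-n) ≤ 1 := by
  intro t
  induction t with
  | zero => simp
  | succ t ih =>
    rw [Finset.sum_Icc_succ_top (by omega : 1 ≤ t+1)]
    have h1 : ∑ n ∈ Finset.Icc 1 t, ((2:ℝ)⁻¹)^(1+(t+1)-n)
        = ∑ n ∈ Finset.Icc 1 t, (2:ℝ)⁻¹ * ((2:ℝ)⁻¹)^(1+t-n) := by
      refine Finset.sum_congr rfl fun n hn => ?_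
      have hn' : n ≤ t := (Finset.mem_Icc.mp hn).2
      have : 1+(t+1)-n = (1+t-n)+1 := by omega
      rw [this, pow_succ]; ring
    rw [h1, ← Finset.mul_sum]
    have : 1+(t+1)-(t+1) = 1 := by omega
    rw [this]
    nlinarith [ih]

lemma enat_le_coe_iff (a : ℕ∞) (m : ℕ) : a ≤ (m:ℕ∞) ↔ a ≠ ⊤ ∧ a.toNat ≤ m := by
  induction a using ENat.recTopCoe with
  | top => simp
  | coe k => simp [Nat.cast_le]

lemma enat_coe_le_iff (n : ℕ) (a : ℕ∞) (ha : a ≠ ⊤) : (n:ℕ∞) ≤ a ↔ n ≤ a.toNat := by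
  induction a using ENat.recTopCoe with
  | top => simp at ha
  | coe k => simp [Nat.cast_le]

lemma enat_top_iff (a : ℕ∞) : a = ⊤ ↔ ∀ n : ℕ, (n:ℕ∞) ≤ a := by
  induction a using ENat.recTopCoe with
  | top => simp
  | coe k =>
    constructor
    · intro h; exact absurd h (ENat.coe_ne_top k)
    · intro h
      have := h (k+1)
      rw [Nat.cast_le] at this
      omega

/-- chaining bound: if on `{τ ≥ n}` the conditional probability that
`τ ∈ [n, n+Θ_n−1]` given `F_{n-1}` is at least `κ^{Θ_n}`, with `κ ∈ (0,1/2]` and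
`2^{q/2} κ = κ⁻¹`, then `Σ_{n≥1} E[(2^{1−Θ_n})^{q/2} 1_{τ ≥ n}] ≤ 2^{q/2} P(τ < ∞)`. -/
theorem statement19
    {Ω : Type*} {m0 : MeasurableSpace Ω} (μ : Measure Ω) [IsProbabilityMeasure μ]
    (ℱ : Filtration ℕ m0) (W : ℕ → Ω → ℝ)
    (hadapted : Adapted ℱ W)
    (hnonneg : ∀ n ω, 0 ≤ W n ω)
    (hW0 : ∀ ω, W 0 ω = 1)
    (A : ℝ) (hA : 1 < A)
    (τ : Ω → ℕ∞)
    (hτ : ∀ ω, τ ω = sInf {t : ℕ∞ | ∃ n : ℕ, t = n ∧ 1 ≤ n ∧ A ≤ W n ω})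
    (κ : ℝ) (hκ0 : 0 < κ) (hκhalf : κ ≤ 1 / 2)
    (Θ : ℕ → Ω → ℕ)
    (hΘpos : ∀ n ω, 1 ≤ Θ n ω)
    (hΘmeas : ∀ n : ℕ, 1 ≤ n → Measurable[ℱ (n - 1)] (Θ n))
    (hcond : ∀ n : ℕ, 1 ≤ n → ∀ᵐ ω ∂μ, (n : ℕ∞) ≤ τ ω →
      κ ^ (Θ n ω) ≤
        (μ[fun ω' => (if (n : ℕ∞) ≤ τ ω' ∧ τ ω' ≤ ((n + Θ n ω' - 1 : ℕ) : ℕ∞)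
            then (1 : ℝ) else 0) | ℱ (n - 1)]) ω)
    (q : ℝ) (hq : (2 : ℝ) ^ (q / 2) * κ = κ⁻¹) :
    ∀ N : ℕ, ∑ n ∈ Finset.Icc 1 N,
        ∫ ω in {ω | (n : ℕ∞) ≤ τ ω}, ((2 : ℝ) ^ ((1 : ℝ) - (Θ n ω : ℝ))) ^ (q / 2) ∂μ ≤
      (2 : ℝ) ^ (q / 2) * (μ {ω | τ ω ≠ ⊤}).toReal := by
  intro N
  -- basic constants
  set c : ℝ := (2:ℝ) ^ (q/2) with hc_def
  have hκ1 : κ ≤ 1 := by linarith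
  have hc0 : 0 < c := Real.rpow_pos_of_pos (by norm_num) _
  have hc : c = κ⁻¹ * κ⁻¹ := by
    have : c * κ * κ⁻¹ = κ⁻¹ * κ⁻¹ := by rw [hq]
    rwa [mul_assoc, mul_inv_cancel₀ hκ0.ne', mul_one] at this
  -- characterization of τ
  have hτge : ∀ (n:ℕ) (ω), ((n:ℕ∞) ≤ τ ω ↔ ∀ k, 1 ≤ k → k < n → W k ω < A) := by
    intro n ω
    rw [hτ, le_sInf_iff]
    constructor
    · intro h k hk1 hkn
      by_contra hA'
      push_neg at hA'
      have := h (k:ℕ∞) ⟨k, rfl, hk1, hA'⟩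
      rw [Nat.cast_le] at this
      omega
    · rintro h t ⟨m, rfl, hm1, hmA⟩
      rw [Nat.cast_le]
      by_contra hc'
      push_neg at hc'
      exact absurd hmA (not_le.mpr (h m hm1 hc'))
  have hτ1 : ∀ ω, ((1:ℕ):ℕ∞) ≤ τ ω := by
    intro ω; rw [hτge]; intro k h1 h2; omega
  -- measurability of W
  have hW : ∀ k, Measurable (W k) :=
    fun k => (hadapted k).mono (ℱ.le k) le_rfl
  -- τ-level sets
  have hSet : ∀ n : ℕ, {ω | (n:ℕ∞) ≤ τ ω} = ⋂ k ∈ Finset.Ico 1 n, {ω | W k ω < A} := by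
    intro n
    ext ω
    simp only [Set.mem_setOf_eq, Set.mem_iInter, Finset.mem_Ico, hτge]
    exact ⟨fun h k hk => h k hk.1 hk.2, fun h k h1 h2 => h k ⟨h1, h2⟩⟩
  have hSmeas : ∀ n:ℕ, 1 ≤ n → MeasurableSet[ℱ (n-1)] {ω | (n:ℕ∞) ≤ τ ω} := by
    intro n hn
    rw [hSet]
    refine Finset.measurableSet_biInter _ fun k hk => ?_
    have hk' : k ≤ n - 1 := by have := (Finset.mem_Ico.mp hk).2; omega
    exact measurableSet_lt ((hadapted k).mono (ℱ.mono hk') le_rfl) measurable_const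
  have hSm0 : ∀ n:ℕ, MeasurableSet {ω | (n:ℕ∞) ≤ τ ω} := by
    intro n
    rw [hSet]
    exact Finset.measurableSet_biInter _ fun k _ =>
      measurableSet_lt (hW k) measurable_const
  have hTopMeas : MeasurableSet {ω | τ ω = ⊤} := by
    have : {ω | τ ω = ⊤} = ⋂ n : ℕ, {ω | (n:ℕ∞) ≤ τ ω} := by
      ext ω; simp only [Set.mem_setOf_eq, Set.mem_iInter, enat_top_iff]
    rw [this]
    exact MeasurableSet.iInter fun n => hSm0 n
  -- measurability of toNat ∘ τ
  have hTmeas : Measurable (fun ω => (τ ω).toNat) := by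
    refine measurable_to_countable' fun m => ?_
    rcases Nat.eq_zero_or_pos m with hm | hm
    · subst hm
      have : (fun ω => (τ ω).toNat) ⁻¹' {0} = {ω | τ ω = ⊤} := by
        ext ω
        simp only [Set.mem_preimage, Set.mem_singleton_iff, Set.mem_setOf_eq]
        constructor
        · intro h
          by_contra hne
          have h1 := (enat_coe_le_iff 1 (τ ω) hne).mp (hτ1 ω)
          omega
        · intro h; rw [h]; rfl
      rw [this]; exact hTopMeas
    · have : (fun ω => (τ ω).toNat) ⁻¹' {m}
          = {ω | (m:ℕ∞) ≤ τ ω} \ {ω | ((m+1:ℕ):ℕ∞) ≤ τ ω} := by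
        ext ω
        simp only [Set.mem_preimage, Set.mem_singleton_iff, Set.mem_diff, Set.mem_setOf_eq]
        by_cases hne : τ ω = ⊤
        · constructor
          · intro h; exfalso; rw [hne] at h; simp at h; omega
          · rintro ⟨-, h2⟩; exact absurd (hne ▸ le_top) h2
        · rw [enat_coe_le_iff _ _ hne, enat_coe_le_iff _ _ hne]
          omega
      rw [this]
      exact (hSm0 m).diff (hSm0 (m+1))
  -- notation
  set T : Ω → ℕ := fun ω => (τ ω).toNat with hT_def
  set D : ℕ → Set Ω := fun n => {ω | (n:ℕ∞) ≤ τ ω} ∩ {ω | τ ω = ⊤}ᶜ with hD_def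
  set h : ℕ → Ω → ℝ := fun n => Set.indicator (D n) (fun ω => κ ^ (1 + T ω - n)) with hh_def
  have hDmeas : ∀ n, MeasurableSet (D n) := fun n => (hSm0 n).inter hTopMeas.compl
  have hhmeas : ∀ n, Measurable (h n) := fun n =>
    ((measurable_from_nat (f := fun t : ℕ => κ ^ (1 + t - n))).comp hTmeas).indicator
      (hDmeas n)
  have hh01 : ∀ n ω, 0 ≤ h n ω ∧ h n ω ≤ 1 := by
    intro n ω
    by_cases hω : ω ∈ D n
    · rw [hh_def]
      simp only [Set.indicator_of_mem hω]
      exact ⟨pow_nonneg hκ0.le _, pow_le_one₀ hκ0.le hκ1⟩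
    · rw [hh_def]; simp only [Set.indicator_of_notMem hω]; norm_num
  have hh_int : ∀ n, Integrable (h n) μ := by
    intro n
    refine (integrable_const (1:ℝ)).mono' (hhmeas n).aestronglyMeasurable ?_
    filter_upwards with ω
    rw [Real.norm_eq_abs, abs_le]
    exact ⟨by linarith [(hh01 n ω).1], (hh01 n ω).2⟩
  -- per-n key bound
  have key : ∀ n ∈ Finset.Icc 1 N,
      (∫ ω in {ω | (n:ℕ∞) ≤ τ ω}, ((2:ℝ) ^ ((1:ℝ) - (Θ n ω : ℝ))) ^ (q/2) ∂μ)
        ≤ c * ∫ ω, h n ω ∂μ := by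
    intro n hnN
    have hn : 1 ≤ n := (Finset.mem_Icc.mp hnN).1
    set S : Set Ω := {ω | (n:ℕ∞) ≤ τ ω} with hS_def
    set φ : Ω → ℝ := fun ω => κ ^ Θ n ω with hφ_def
    set g : Ω → ℝ := fun ω' => if (n : ℕ∞) ≤ τ ω' ∧ τ ω' ≤ ((n + Θ n ω' - 1 : ℕ) : ℕ∞)
        then (1 : ℝ) else 0 with hg_def
    set f : Ω → ℝ := S.indicator φ with hf_def
    have mΘ : Measurable (Θ n) := (hΘmeas n hn).mono (ℱ.le (n-1)) le_rfl
    have mφ : Measurable φ := (measurable_from_nat (f := fun t : ℕ => κ ^ t)).comp mΘ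
    have hφ0 : ∀ ω, 0 ≤ φ ω := fun ω => pow_nonneg hκ0.le _
    have hφ1 : ∀ ω, φ ω ≤ 1 := fun ω => pow_le_one₀ hκ0.le hκ1
    -- g as indicator
    have hgE : g = Set.indicator (S ∩ ({ω | τ ω = ⊤}ᶜ ∩ {ω | T ω ≤ n + Θ n ω - 1}))
        (fun _ => (1:ℝ)) := by
      funext ω
      simp only [hg_def, Set.indicator_apply]
      by_cases hcnd : (n : ℕ∞) ≤ τ ω ∧ τ ω ≤ ((n + Θ n ω - 1 : ℕ) : ℕ∞)
      · rw [if_pos hcnd, if_pos]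
        have h2 := (enat_le_coe_iff _ _).mp hcnd.2
        exact ⟨hcnd.1, h2.1, h2.2⟩
      · rw [if_neg hcnd, if_neg]
        rintro ⟨h1, h2, h3⟩
        exact hcnd ⟨h1, (enat_le_coe_iff _ _).mpr ⟨h2, h3⟩⟩
    have hgmeas : Measurable g := by
      rw [hgE]
      refine measurable_const.indicator ?_
      exact (hSm0 n).inter (hTopMeas.compl.inter
        (measurableSet_le hTmeas ((measurable_from_nat (f := fun t : ℕ => n + t - 1)).comp mΘ)))
    have hg01 : ∀ ω, 0 ≤ g ω ∧ g ω ≤ 1 := by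
      intro ω; simp only [hg_def]
      by_cases hcnd : (n : ℕ∞) ≤ τ ω ∧ τ ω ≤ ((n + Θ n ω - 1 : ℕ) : ℕ∞)
      · rw [if_pos hcnd]; norm_num
      · rw [if_neg hcnd]; norm_num
    have hg_int : Integrable g μ := by
      refine (integrable_const (1:ℝ)).mono' hgmeas.aestronglyMeasurable ?_
      filter_upwards with ω
      rw [Real.norm_eq_abs, abs_le]
      exact ⟨by linarith [(hg01 ω).1], (hg01 ω).2⟩
    set CE : Ω → ℝ := μ[g | ℱ (n-1)] with hCE_def
    have hCE0 : 0 ≤ᵐ[μ] CE := condExp_nonneg (Filter.Eventually.of_forall fun ω => (hg01 ω).1)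
    have hf_bound : ∀ᵐ ω ∂μ, ‖f ω‖ ≤ 1 := by
      filter_upwards with ω
      rw [hf_def, Real.norm_eq_abs, abs_le]
      by_cases hω : ω ∈ S
      · simp only [Set.indicator_of_mem hω]
        exact ⟨by linarith [hφ0 ω], hφ1 ω⟩
      · simp only [Set.indicator_of_notMem hω]; norm_num
    have hf_m0 : Measurable f := mφ.indicator (hSm0 n)
    have hf_sm : StronglyMeasurable[ℱ (n-1)] f := by
      refine StronglyMeasurable.indicator ?_ (hSmeas n hn)
      exact (measurable_from_nat.comp (hΘmeas n hn)).stronglyMeasurable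
    -- integrand rewrite
    have hrw : ∀ ω, ((2:ℝ) ^ ((1:ℝ) - (Θ n ω : ℝ))) ^ (q/2) = c * (φ ω)^2 := by
      intro ω
      have h2 : (0:ℝ) ≤ 2 := by norm_num
      have e1 : ((2:ℝ) ^ ((1:ℝ) - (Θ n ω : ℝ))) ^ (q/2)
          = c ^ ((1:ℝ) - (Θ n ω : ℝ)) := by
        rw [hc_def, ← Real.rpow_mul h2, mul_comm, Real.rpow_mul h2]
      rw [e1, Real.rpow_sub hc0, Real.rpow_one, Real.rpow_natCast]
      show c / c ^ Θ n ω = c * (κ ^ Θ n ω) ^ 2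
      rw [hc]
      have hκne : κ ≠ 0 := hκ0.ne'
      rw [div_eq_mul_inv, ← inv_pow, mul_inv, inv_inv]
      ring
    -- integrabilities
    have hI1 : Integrable (S.indicator fun ω => (φ ω)^2) μ := by
      refine (integrable_const (1:ℝ)).mono'
        ((mφ.pow_const 2).indicator (hSm0 n)).aestronglyMeasurable ?_
      filter_upwards with ω
      rw [Real.norm_eq_abs, abs_le]
      by_cases hω : ω ∈ S
      · simp only [Set.indicator_of_mem hω]
        exact ⟨by nlinarith [hφ0 ω], by nlinarith [hφ0 ω, hφ1 ω]⟩
      · simp only [Set.indicator_of_notMem hω]; norm_num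
    have hI2 : Integrable (f * CE) μ :=
      integrable_condExp.bdd_mul hf_m0.aestronglyMeasurable hf_bound
    have hfg_int : Integrable (f * g) μ :=
      hg_int.bdd_mul hf_m0.aestronglyMeasurable hf_bound
    -- step 1 : ∫_S φ² ≤ ∫ f ⬝ CE
    have step1 : ∫ ω, S.indicator (fun ω => (φ ω)^2) ω ∂μ ≤ ∫ ω, (f * CE) ω ∂μ := by
      refine integral_mono_ae hI1 hI2 ?_
      filter_upwards [hcond n hn, hCE0] with ω h1 h2
      by_cases hω : ω ∈ S
      · have hφCE : φ ω ≤ CE ω := h1 hω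
        simp only [Set.indicator_of_mem hω, hf_def, Pi.mul_apply]
        calc (φ ω)^2 = φ ω * φ ω := sq (φ ω)
          _ ≤ φ ω * CE ω := mul_le_mul_of_nonneg_left hφCE (hφ0 ω)
      · simp only [Set.indicator_of_notMem hω, hf_def, Pi.mul_apply, zero_mul, le_refl]
    -- step 2 : ∫ f ⬝ CE = ∫ f ⬝ g
    have step2 : ∫ ω, (f * CE) ω ∂μ = ∫ ω, (f * g) ω ∂μ := by
      have hpull : μ[f * g | ℱ (n-1)] =ᵐ[μ] f * CE :=
        condExp_stronglyMeasurable_mul_of_bound (ℱ.le (n-1)) hf_sm hg_int 1 hf_bound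
      rw [← integral_congr_ae hpull, integral_condExp (ℱ.le (n-1))]
    -- step 3 : ∫ f ⬝ g ≤ ∫ h n
    have step3 : ∫ ω, (f * g) ω ∂μ ≤ ∫ ω, h n ω ∂μ := by
      refine integral_mono hfg_int (hh_int n) fun ω => ?_
      rw [Pi.mul_apply]
      by_cases hE : ω ∈ S ∩ ({ω | τ ω = ⊤}ᶜ ∩ {ω | T ω ≤ n + Θ n ω - 1})
      · have hg1 : g ω = 1 := by rw [hgE]; exact Set.indicator_of_mem hE _
        obtain ⟨hωS, hne, hT⟩ := hE
        have hf1 : f ω = φ ω := Set.indicator_of_mem hωS _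
        have hnT : n ≤ T ω := (enat_coe_le_iff n (τ ω) hne).mp hωS
        have hωD : ω ∈ D n := ⟨hωS, hne⟩
        have hhv : h n ω = κ ^ (1 + T ω - n) := Set.indicator_of_mem hωD _
        rw [hg1, hf1, mul_one, hhv]
        refine pow_le_pow_of_le_one hκ0.le hκ1 ?_
        have h1' := hΘpos n ω
        have hT' : T ω ≤ n + Θ n ω - 1 := hT
        omega
      · have hg0 : g ω = 0 := by rw [hgE]; exact Set.indicator_of_notMem hE _
        rw [hg0, mul_zero]
        exact (hh01 n ω).1
    -- assemble
    calc (∫ ω in S, ((2:ℝ) ^ ((1:ℝ) - (Θ n ω : ℝ))) ^ (q/2) ∂μ)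
        = ∫ ω in S, c * (φ ω)^2 ∂μ := by simp only [hrw]
      _ = c * ∫ ω in S, (φ ω)^2 ∂μ := integral_const_mul c _
      _ = c * ∫ ω, S.indicator (fun ω => (φ ω)^2) ω ∂μ := by
          rw [integral_indicator (hSm0 n)]
      _ ≤ c * ∫ ω, h n ω ∂μ := by
          refine mul_le_mul_of_nonneg_left ?_ hc0.le
          exact le_trans step1 (step2 ▸ step3)
  -- pointwise bound on the sum
  have hκ2 : κ ≤ (2:ℝ)⁻¹ := by rw [inv_eq_one_div]; linarith
  have hsum_pt : ∀ ω, ∑ n ∈ Finset.Icc 1 N, h n ω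
      ≤ Set.indicator {ω | τ ω ≠ ⊤} (fun _ => (1:ℝ)) ω := by
    intro ω
    by_cases hne : τ ω = ⊤
    · have hz : ∑ n ∈ Finset.Icc 1 N, h n ω = 0 := by
        refine Finset.sum_eq_zero fun n _ => ?_
        refine Set.indicator_of_notMem ?_ _
        rintro ⟨-, h2⟩
        exact h2 hne
      have hz2 : Set.indicator {ω | τ ω ≠ ⊤} (fun _ => (1:ℝ)) ω = 0 := by
        refine Set.indicator_of_notMem ?_ _
        simp [hne]
      rw [hz, hz2]
    · have hmem : ω ∈ {ω | τ ω ≠ ⊤} := hne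
      rw [Set.indicator_of_mem hmem]
      have ht1 : 1 ≤ T ω := (enat_coe_le_iff 1 (τ ω) hne).mp (by exact_mod_cast hτ1 ω)
      have hstep : ∀ n ∈ Finset.Icc 1 N,
          h n ω ≤ (if n ≤ T ω then ((2:ℝ)⁻¹)^(1 + T ω - n) else 0) := by
        intro n _
        by_cases hnt : n ≤ T ω
        · rw [if_pos hnt]
          have hωD : ω ∈ D n := ⟨(enat_coe_le_iff n (τ ω) hne).mpr hnt, hne⟩
          rw [hh_def]
          simp only [Set.indicator_of_mem hωD]
          exact pow_le_pow_left₀ hκ0.le hκ2 _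
        · rw [if_neg hnt]
          have hωD : ω ∉ D n := by
            rintro ⟨h1, -⟩
            exact hnt ((enat_coe_le_iff n (τ ω) hne).mp h1)
          rw [hh_def]
          simp only [Set.indicator_of_notMem hωD, le_refl]
      calc ∑ n ∈ Finset.Icc 1 N, h n ω
          ≤ ∑ n ∈ Finset.Icc 1 N, (if n ≤ T ω then ((2:ℝ)⁻¹)^(1 + T ω - n) else 0) :=
            Finset.sum_le_sum hstep
        _ = ∑ n ∈ (Finset.Icc 1 N).filter (· ≤ T ω), ((2:ℝ)⁻¹)^(1 + T ω - n) :=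
            (Finset.sum_filter _ _).symm
        _ ≤ ∑ n ∈ Finset.Icc 1 (T ω), ((2:ℝ)⁻¹)^(1 + T ω - n) := by
            refine Finset.sum_le_sum_of_subset_of_nonneg ?_ (fun i _ _ => by positivity)
            intro x hx
            simp only [Finset.mem_filter, Finset.mem_Icc] at hx ⊢
            exact ⟨hx.1.1, hx.2⟩
        _ ≤ 1 := geo_aux (T ω)
  -- final chain
  have hNeTopMeas : MeasurableSet {ω | τ ω ≠ ⊤} := hTopMeas.compl
  have hInd_int : Integrable (Set.indicator {ω | τ ω ≠ ⊤} (fun _ => (1:ℝ))) μ :=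
    (integrable_const (1:ℝ)).indicator hNeTopMeas
  calc ∑ n ∈ Finset.Icc 1 N,
        ∫ ω in {ω | (n : ℕ∞) ≤ τ ω}, ((2 : ℝ) ^ ((1 : ℝ) - (Θ n ω : ℝ))) ^ (q / 2) ∂μ
      ≤ ∑ n ∈ Finset.Icc 1 N, c * ∫ ω, h n ω ∂μ := Finset.sum_le_sum key
    _ = c * ∑ n ∈ Finset.Icc 1 N, ∫ ω, h n ω ∂μ := by rw [Finset.mul_sum]
    _ = c * ∫ ω, ∑ n ∈ Finset.Icc 1 N, h n ω ∂μ := by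
        rw [integral_finset_sum _ fun i _ => hh_int i]
    _ ≤ c * ∫ ω, Set.indicator {ω | τ ω ≠ ⊤} (fun _ => (1:ℝ)) ω ∂μ := by
        refine mul_le_mul_of_nonneg_left ?_ hc0.le
        exact integral_mono (integrable_finset_sum _ fun i _ => hh_int i) hInd_int hsum_pt
    _ = c * (μ {ω | τ ω ≠ ⊤}).toReal := by
        rw [integral_indicator_const (1:ℝ) hNeTopMeas, smul_eq_mul, mul_one, Measure.real]
end
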